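/- arXiv:1411.6229 — 5 statements merged into one kernel-verified Lean document; each statement's English description precedes it below -/
import Mathlib

section
/- Let τ be a foretellable time, D ∈ ℱ, and X a measurable process on [0,τ). If there exists a nondecreasing sequence (τ_n)_{n∈ℕ} of stopping times with D ⊆ ⋃_n {τ_n ≥ τ} almost surely, such that for each n the stopped process X^{τ_n} (defined by X^{τ_n}_t = X_t for t < τ_n and X^{τ_n}_t = X_{τ_n}·1_{τ_n<τ} for t ≥ τ_n) is extended locally integrable on D, then X is extended locally integrable on D. The same holds with 'integrable' replaced by 'bounded'. In words: an extended locally extended locally integrable (bounded) process is extended locally integrable (bounded). -/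
open MeasureTheory Filter Set
open scoped ENNReal NNReal Topology

namespace PaperStmt

variable {Ω : Type*}

/-- A `[0,∞]`-valued random time is a stopping time for a filtration indexed by `ℝ≥0`. -/
def IsStoppingTimeE {m : MeasurableSpace Ω} (𝓕 : Filtration ℝ≥0 m) (τ : Ω → ℝ≥0∞) : Prop :=
  ∀ t : ℝ≥0, MeasurableSet[𝓕 t] {ω | τ ω ≤ (t : ℝ≥0∞)}

/-- `τs` is an announcing sequence for `τ`. -/
def Announces {m : MeasurableSpace Ω} (𝓕 : Filtration ℝ≥0 m) (μ : Measure Ω)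
    (τ : Ω → ℝ≥0∞) (τs : ℕ → Ω → ℝ≥0∞) : Prop :=
  (∀ n, IsStoppingTimeE 𝓕 (τs n)) ∧
  (∀ ω, Monotone fun n => τs n ω) ∧
  (∀ᵐ ω ∂μ, (∀ n, 0 < τ ω → τs n ω < τ ω) ∧
    Tendsto (fun n => τs n ω) atTop (𝓝 (τ ω)))

/-- `τ` is a foretellable time. -/
def Foretellable {m : MeasurableSpace Ω} (𝓕 : Filtration ℝ≥0 m) (μ : Measure Ω)
    (τ : Ω → ℝ≥0∞) : Prop :=
  ∃ τs, Announces 𝓕 μ τ τs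

/-- Extended local integrability of the process `X` on `D`, where `X` is a process on the
stochastic interval `[0,τ)`. -/
def ExtLocIntegrableOn {m : MeasurableSpace Ω} (𝓕 : Filtration ℝ≥0 m) (μ : Measure Ω)
    (τ : Ω → ℝ≥0∞) (X : ℝ≥0 → Ω → ℝ) (D : Set Ω) : Prop :=
  ∃ (ρ : ℕ → Ω → ℝ≥0∞) (Θ : ℕ → Ω → ℝ),
    (∀ n, IsStoppingTimeE 𝓕 (ρ n)) ∧
    (∀ ω, Monotone fun n => ρ n ω) ∧
    (∀ n, Integrable (Θ n) μ) ∧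
    ∀ᵐ ω ∂μ,
      (∀ n, ∀ t : ℝ≥0, (t : ℝ≥0∞) ≤ ρ n ω → (t : ℝ≥0∞) < τ ω → |X t ω| ≤ Θ n ω) ∧
      (ω ∈ D → ∃ n, τ ω ≤ ρ n ω)

/-- Extended local boundedness of the process `X` on `D`, where `X` is a process on the
stochastic interval `[0,τ)`. -/
def ExtLocBoundedOn {m : MeasurableSpace Ω} (𝓕 : Filtration ℝ≥0 m) (μ : Measure Ω)
    (τ : Ω → ℝ≥0∞) (X : ℝ≥0 → Ω → ℝ) (D : Set Ω) : Prop :=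
  ∃ (ρ : ℕ → Ω → ℝ≥0∞) (c : ℕ → ℝ),
    (∀ n, IsStoppingTimeE 𝓕 (ρ n)) ∧
    (∀ ω, Monotone fun n => ρ n ω) ∧
    ∀ᵐ ω ∂μ,
      (∀ n, ∀ t : ℝ≥0, (t : ℝ≥0∞) ≤ ρ n ω → (t : ℝ≥0∞) < τ ω → |X t ω| ≤ c n) ∧
      (ω ∈ D → ∃ n, τ ω ≤ ρ n ω)

/-- The process `X` on `[0,τ)` stopped at the random time `σ`:
`X^σ_t = X_t` for `t < σ`, and `X^σ_t = X_σ · 1_{σ < τ}` for `t ≥ σ`. -/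
noncomputable def stoppedAt (X : ℝ≥0 → Ω → ℝ) (τ σ : Ω → ℝ≥0∞) : ℝ≥0 → Ω → ℝ :=
  fun t ω =>
    if (t : ℝ≥0∞) < σ ω then X t ω
    else if σ ω < τ ω then X (σ ω).toNNReal ω else 0

/-- Right-continuity with left limits of the path `t ↦ X t ω` on `[0, τω)`. -/
def CadlagOn (X : ℝ≥0 → Ω → ℝ) (τω : ℝ≥0∞) (ω : Ω) : Prop :=
  (∀ t : ℝ≥0, (t : ℝ≥0∞) < τω →
    Tendsto (fun s => X s ω) (𝓝[≥] t) (𝓝 (X t ω))) ∧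
  (∀ t : ℝ≥0, 0 < t → (t : ℝ≥0∞) < τω →
    ∃ L : ℝ, Tendsto (fun s => X s ω) (𝓝[<] t) (𝓝 L))

/-- `Δ` is the jump process of `X` on `[0, τω)` along the path of `ω`
(with the convention `ΔX_0 = 0`, i.e. `X_{0-} = X_0`). -/
def HasJumps (X Δ : ℝ≥0 → Ω → ℝ) (τω : ℝ≥0∞) (ω : Ω) : Prop :=
  Δ 0 ω = 0 ∧ ∀ t : ℝ≥0, 0 < t → (t : ℝ≥0∞) < τω →
    Tendsto (fun s => X s ω) (𝓝[<] t) (𝓝 (X t ω - Δ t ω))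

/-- The filter of times `t ↑ τω`, pulled back to `ℝ≥0`; convergence of `t ↦ X t ω` along
`toTau (τ ω)` expresses convergence of `X_t` as `t → τ(ω)` from the left (with `t < τ(ω)`). -/
def toTau (τω : ℝ≥0∞) : Filter ℝ≥0 :=
  Filter.comap (fun t : ℝ≥0 => (t : ℝ≥0∞)) (𝓝[<] τω)

lemma key_extLoc {m : MeasurableSpace Ω} (𝓕 : Filtration ℝ≥0 m) (μ : Measure Ω)
    (τ : Ω → ℝ≥0∞) (X : ℝ≥0 → Ω → ℝ) (D : Set Ω)
    (σs : ℕ → Ω → ℝ≥0∞)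
    (hσs : ∀ n, IsStoppingTimeE 𝓕 (σs n))
    (hσcover : ∀ᵐ ω ∂μ, ω ∈ D → ∃ n, τ ω ≤ σs n ω)
    (ρ : ℕ → ℕ → Ω → ℝ≥0∞) (Θ : ℕ → ℕ → Ω → ℝ)
    (hρst : ∀ n k, IsStoppingTimeE 𝓕 (ρ n k))
    (hae : ∀ n, ∀ᵐ ω ∂μ,
      (∀ k, ∀ t : ℝ≥0, (t : ℝ≥0∞) ≤ ρ n k ω → (t : ℝ≥0∞) < τ ω →
        |stoppedAt X τ (σs n) t ω| ≤ Θ n k ω) ∧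
      (ω ∈ D → ∃ k, τ ω ≤ ρ n k ω)) :
    ∃ ρ' : ℕ → Ω → ℝ≥0∞,
      (∀ m', IsStoppingTimeE 𝓕 (ρ' m')) ∧
      (∀ ω, Monotone fun m' => ρ' m' ω) ∧
      ∀ᵐ ω ∂μ,
        (∀ m', ∀ t : ℝ≥0, (t : ℝ≥0∞) ≤ ρ' m' ω → (t : ℝ≥0∞) < τ ω →
          |X t ω| ≤ ∑ p ∈ Finset.range (m' + 1) ×ˢ Finset.range (m' + 1), |Θ p.1 p.2 ω|) ∧
        (ω ∈ D → ∃ m', τ ω ≤ ρ' m' ω) := by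
  set S : ℕ → Finset (ℕ × ℕ) := fun m' => Finset.range (m' + 1) ×ˢ Finset.range (m' + 1) with hS
  refine ⟨fun m' ω => (S m').sup fun p => min (σs p.1 ω) (ρ p.1 p.2 ω), ?_, ?_, ?_⟩
  · intro m' t
    have heq : {ω | ((S m').sup fun p => min (σs p.1 ω) (ρ p.1 p.2 ω)) ≤ (t : ℝ≥0∞)} =
        ⋂ p ∈ S m', ({ω | σs p.1 ω ≤ (t : ℝ≥0∞)} ∪ {ω | ρ p.1 p.2 ω ≤ (t : ℝ≥0∞)}) := by
      ext ω
      simp only [Set.mem_setOf_eq, Set.mem_iInter, Set.mem_union, Finset.sup_le_iff, min_le_iff]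
    rw [heq]
    exact MeasurableSet.biInter (S m').countable_toSet
      fun p _ => (hσs p.1 t).union (hρst p.1 p.2 t)
  · intro ω m₁ m₂ hm
    exact Finset.sup_mono (Finset.product_subset_product
      (Finset.range_subset_range.2 (by omega)) (Finset.range_subset_range.2 (by omega)))
  · filter_upwards [hσcover, ae_all_iff.2 hae] with ω hcov hall
    constructor
    · intro m' t ht htlt
      have hne : (S m').Nonempty := Finset.Nonempty.product
        ⟨0, Finset.mem_range.2 (by omega)⟩ ⟨0, Finset.mem_range.2 (by omega)⟩
      obtain ⟨p, hp, hpe⟩ := Finset.exists_mem_eq_sup (S m') hne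
        fun p => min (σs p.1 ω) (ρ p.1 p.2 ω)
      rw [hpe] at ht
      have htσ : (t : ℝ≥0∞) ≤ σs p.1 ω := ht.trans (min_le_left _ _)
      have htρ : (t : ℝ≥0∞) ≤ ρ p.1 p.2 ω := ht.trans (min_le_right _ _)
      have hstop := (hall p.1).1 p.2 t htρ htlt
      have hX : stoppedAt X τ (σs p.1) t ω = X t ω := by
        unfold stoppedAt
        by_cases h1 : (t : ℝ≥0∞) < σs p.1 ω
        · simp [h1]
        · have heq2 : σs p.1 ω = (t : ℝ≥0∞) := le_antisymm (not_lt.1 h1) htσ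
          simp [h1, heq2, htlt]
      rw [hX] at hstop
      refine hstop.trans ((le_abs_self _).trans ?_)
      exact Finset.single_le_sum (f := fun q => |Θ q.1 q.2 ω|) (fun q _ => abs_nonneg _) hp
    · intro hωD
      obtain ⟨n, hn⟩ := hcov hωD
      obtain ⟨k, hk⟩ := (hall n).2 hωD
      refine ⟨max n k, ?_⟩
      have hmem : (n, k) ∈ S (max n k) := by
        simp [hS, Finset.mem_product, Finset.mem_range]
      exact (le_min hn hk).trans (Finset.le_sup (f := fun p => min (σs p.1 ω) (ρ p.1 p.2 ω)) hmem)

/-- **Extended localization of extended localization.** If there is a nondecreasing sequence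
`(σs n)` of stopping times with `D ⊆ ⋃ n {σs n ≥ τ}` a.s. such that each stopped process
`X^{σs n}` is extended locally integrable (bounded) on `D`, then `X` is extended locally
integrable (bounded) on `D`. -/
theorem extLoc_of_stopped {m : MeasurableSpace Ω} (𝓕 : Filtration ℝ≥0 m) (μ : Measure Ω)
    [IsProbabilityMeasure μ] (τ : Ω → ℝ≥0∞) (hτ : Foretellable 𝓕 μ τ)
    (D : Set Ω) (hD : MeasurableSet D)
    (X : ℝ≥0 → Ω → ℝ) (hXmeas : Measurable (Function.uncurry X))
    (σs : ℕ → Ω → ℝ≥0∞)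
    (hσs : ∀ n, IsStoppingTimeE 𝓕 (σs n))
    (hσmono : ∀ ω, Monotone fun n => σs n ω)
    (hσcover : ∀ᵐ ω ∂μ, ω ∈ D → ∃ n, τ ω ≤ σs n ω) :
    ((∀ n, ExtLocIntegrableOn 𝓕 μ τ (stoppedAt X τ (σs n)) D) →
      ExtLocIntegrableOn 𝓕 μ τ X D) ∧
    ((∀ n, ExtLocBoundedOn 𝓕 μ τ (stoppedAt X τ (σs n)) D) →
      ExtLocBoundedOn 𝓕 μ τ X D) := by
  constructor
  · intro h
    choose ρ Θ hρst hρmono hΘint hae using h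
    obtain ⟨ρ', h1, h2, h3⟩ := key_extLoc 𝓕 μ τ X D σs hσs hσcover ρ Θ hρst hae
    exact ⟨ρ', fun m' ω => ∑ p ∈ Finset.range (m' + 1) ×ˢ Finset.range (m' + 1), |Θ p.1 p.2 ω|,
      h1, h2, fun m' => integrable_finset_sum _ fun p _ => (hΘint p.1 p.2).abs, h3⟩
  · intro h
    choose ρ c hρst hρmono hae using h
    obtain ⟨ρ', h1, h2, h3⟩ := key_extLoc 𝓕 μ τ X D σs hσs hσcover ρ
      (fun n k _ => c n k) hρst hae
    exact ⟨ρ', fun m' => ∑ p ∈ Finset.range (m' + 1) ×ˢ Finset.range (m' + 1), |c p.1 p.2|,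
      h1, h2, h3⟩

end PaperStmt
end

section
/- Let (p_n)_{n≥1} be real numbers with p_n ∈ (0,1) and Σ_{n=1}^∞ p_n < ∞, let (x_n)_{n≥1} be real numbers, and let (Θ_n)_{n≥1} be independent random variables with P(Θ_n = 1) = p_n and P(Θ_n = 0) = 1 − p_n. Set M_m = Σ_{n=1}^m x_n (1 − Θ_n/p_n). Then, almost surely, lim_{m→∞} M_m exists in ℝ if and only if the deterministic series Σ_{n=1}^∞ x_n converges in ℝ. -/
open MeasureTheory Filter Set Finset
open scoped ENNReal Topology

/-- **Random walk with large jumps: convergence.** Let `p n ∈ (0,1)` with `∑ p n < ∞`, let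
`(x n)` be reals, and let `(Θ n)` be independent random variables with `P(Θ n = 1) = p n` and
`P(Θ n = 0) = 1 - p n`. Set `M m = ∑_{n<m} x n (1 - Θ n / p n)`. Then, almost surely,
`lim_m M m` exists in `ℝ` if and only if the deterministic series `∑ x n` converges. -/
theorem randomWalk_convergence_iff
    {Ω : Type*} {mΩ : MeasurableSpace Ω} (μ : Measure Ω) [IsProbabilityMeasure μ]
    (p x : ℕ → ℝ) (hp : ∀ n, 0 < p n ∧ p n < 1) (hpsum : Summable p)
    (Θ : ℕ → Ω → ℝ) (hΘmeas : ∀ n, Measurable (Θ n))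
    (hindep : ProbabilityTheory.iIndepFun Θ μ)
    (h1 : ∀ n, μ {ω | Θ n ω = 1} = ENNReal.ofReal (p n))
    (h0 : ∀ n, μ {ω | Θ n ω = 0} = ENNReal.ofReal (1 - p n)) :
    ∀ᵐ ω ∂μ,
      ((∃ L : ℝ, Tendsto (fun m => ∑ n ∈ Finset.range m, x n * (1 - Θ n ω / p n))
          atTop (𝓝 L)) ↔
        (∃ S : ℝ, Tendsto (fun m => ∑ n ∈ Finset.range m, x n) atTop (𝓝 S))) := by
  have hmeas0 : ∀ n, MeasurableSet {ω | Θ n ω = 0} := fun n =>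
    (hΘmeas n) (measurableSet_singleton 0)
  set s : ℕ → Set Ω := fun n => {ω | Θ n ω ≠ 0} with hs
  have hμs : ∀ n, μ (s n) = ENNReal.ofReal (p n) := by
    intro n
    have hc : s n = {ω | Θ n ω = 0}ᶜ := rfl
    rw [hc, measure_compl (hmeas0 n) (measure_ne_top μ _), h0 n, measure_univ]
    rw [← ENNReal.ofReal_one,
      ← ENNReal.ofReal_sub _ (by linarith [(hp n).2] : (0:ℝ) ≤ 1 - p n)]
    norm_num
  have hsum : ∑' n, μ (s n) ≠ ∞ := by
    simp_rw [hμs]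
    rw [← ENNReal.ofReal_tsum_of_nonneg (fun n => (hp n).1.le) hpsum]
    exact ENNReal.ofReal_ne_top
  filter_upwards [MeasureTheory.ae_eventually_notMem hsum] with ω hω
  obtain ⟨N, hN⟩ := eventually_atTop.mp hω
  have hzero : ∀ n, N ≤ n → Θ n ω = 0 := fun n hn => not_not.mp (hN n hn)
  set c : ℝ := ∑ n ∈ Finset.range N, (x n * (1 - Θ n ω / p n) - x n) with hc
  have key : ∀ m, N ≤ m → (∑ n ∈ Finset.range m, x n * (1 - Θ n ω / p n)) =
      (∑ n ∈ Finset.range m, x n) + c := by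
    intro m hm
    have h2 : (∑ n ∈ Finset.range m, (x n * (1 - Θ n ω / p n) - x n)) = c := by
      rw [hc]
      refine (Finset.sum_subset (Finset.range_subset_range.mpr hm) ?_).symm
      intro n _ hn'
      simp only [Finset.mem_range, not_lt] at hn'
      rw [hzero n hn']
      ring
    rw [← h2, Finset.sum_sub_distrib]
    ring
  have heq : (fun m => ∑ n ∈ Finset.range m, x n * (1 - Θ n ω / p n)) =ᶠ[atTop]
      (fun m => (∑ n ∈ Finset.range m, x n) + c) :=
    eventually_atTop.mpr ⟨N, key⟩
  constructor
  · rintro ⟨L, hL⟩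
    refine ⟨L - c, ?_⟩
    have h3 : Tendsto (fun m => (∑ n ∈ Finset.range m, x n) + c) atTop (𝓝 L) :=
      hL.congr' heq
    have h4 := h3.sub_const c
    simpa using h4
  · rintro ⟨S, hS⟩
    refine ⟨S + c, ?_⟩
    exact ((hS.add_const c)).congr' heq.symm
end

section
/- Let (p_n)_{n≥1} be real numbers with p_n ∈ (0,1) and Σ_{n=1}^∞ p_n < ∞, let (x_n)_{n≥1} be real numbers, and let (Θ_n)_{n≥1} be independent random variables with P(Θ_n = 1) = p_n and P(Θ_n = 0) = 1 − p_n. Then, almost surely, Σ_{n=1}^∞ x_n² (1 − Θ_n/p_n)² < ∞ if and only if Σ_{n=1}^∞ x_n² < ∞. (The left-hand series is the quadratic variation at infinity of the piecewise constant martingale with jumps x_n(1 − Θ_n/p_n).) -/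
open MeasureTheory Filter Set Finset
open scoped ENNReal Topology

/-- **Random walk with large jumps: quadratic variation.** Let `p n ∈ (0,1)` with
`∑ p n < ∞`, let `(x n)` be reals, and let `(Θ n)` be independent random variables with
`P(Θ n = 1) = p n` and `P(Θ n = 0) = 1 - p n`. Then, almost surely,
`∑ n (x n)² (1 - Θ n / p n)² < ∞` if and only if `∑ n (x n)² < ∞`. -/
theorem randomWalk_quadraticVariation_iff
    {Ω : Type*} {mΩ : MeasurableSpace Ω} (μ : Measure Ω) [IsProbabilityMeasure μ]
    (p x : ℕ → ℝ) (hp : ∀ n, 0 < p n ∧ p n < 1) (hpsum : Summable p)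
    (Θ : ℕ → Ω → ℝ) (hΘmeas : ∀ n, Measurable (Θ n))
    (hindep : ProbabilityTheory.iIndepFun Θ μ)
    (h1 : ∀ n, μ {ω | Θ n ω = 1} = ENNReal.ofReal (p n))
    (h0 : ∀ n, μ {ω | Θ n ω = 0} = ENNReal.ofReal (1 - p n)) :
    ∀ᵐ ω ∂μ,
      (Summable (fun n => (x n * (1 - Θ n ω / p n)) ^ 2) ↔
        Summable (fun n => (x n) ^ 2)) := by
  -- The sets where Θ n ≠ 0 have measure p n, summable, so Borel–Cantelli applies.
  have hmeas0 : ∀ n, MeasurableSet {ω | Θ n ω = 0} := fun n =>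
    (hΘmeas n) (measurableSet_singleton 0)
  have hμE : ∀ n, μ {ω | Θ n ω ≠ 0} = ENNReal.ofReal (p n) := by
    intro n
    have hc : {ω | Θ n ω ≠ 0} = {ω | Θ n ω = 0}ᶜ := rfl
    rw [hc, measure_compl (hmeas0 n) (measure_ne_top μ _), measure_univ, h0 n,
      ← ENNReal.ofReal_one, ← ENNReal.ofReal_sub _ (by linarith [(hp n).2])]
    ring_nf
  have hsum : (∑' n, μ {ω | Θ n ω ≠ 0}) ≠ ∞ := by
    simp only [hμE]
    rw [← ENNReal.ofReal_tsum_of_nonneg (fun n => (hp n).1.le) hpsum]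
    exact ENNReal.ofReal_ne_top
  have hae : ∀ᵐ ω ∂μ, ∀ᶠ n in atTop, ω ∉ {ω | Θ n ω ≠ 0} := ae_eventually_notMem hsum
  filter_upwards [hae] with ω hω
  obtain ⟨N, hN⟩ := eventually_atTop.1 hω
  have hzero : ∀ n ≥ N, Θ n ω = 0 := fun n hn => not_not.1 (hN n hn)
  rw [← summable_nat_add_iff N, ← summable_nat_add_iff (f := fun n => (x n) ^ 2) N]
  apply summable_congr
  intro n
  rw [hzero (n + N) (Nat.le_add_left N n)]
  simp
end

section
/- Let (p_n)_{n≥1} be real numbers with p_n ∈ (0,1) and Σ_{n=1}^∞ p_n < ∞, let (x_n)_{n≥1} be real numbers with Σ_{n=1}^∞ |x_n| = ∞, and let (Θ_n)_{n≥1} be independent random variables with P(Θ_n = 1) = p_n and P(Θ_n = 0) = 1 − p_n. Then, almost surely, Σ_{n=1}^m |x_n| (1 − Θ_n/p_n) → +∞ as m → ∞. (Consequently the martingale M_m = Σ_{n=1}^m x_n(1 − Θ_n/p_n) is not a semimartingale on the closed time interval [0,∞]: integrating the bounded predictable integrand sign(x_n) against it produces a divergent process.) -/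
open MeasureTheory Filter Set Finset
open scoped ENNReal Topology

/-- **Random walk with large jumps: divergence under non-absolute-summability.** Let
`p n ∈ (0,1)` with `∑ p n < ∞`, let `(x n)` be reals with `∑ |x n| = ∞`, and let `(Θ n)` be
independent random variables with `P(Θ n = 1) = p n` and `P(Θ n = 0) = 1 - p n`. Then, almost
surely, `∑_{n<m} |x n| (1 - Θ n / p n) → +∞` as `m → ∞`. -/
theorem randomWalk_divergence
    {Ω : Type*} {mΩ : MeasurableSpace Ω} (μ : Measure Ω) [IsProbabilityMeasure μ]
    (p x : ℕ → ℝ) (hp : ∀ n, 0 < p n ∧ p n < 1) (hpsum : Summable p)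
    (hxdiv : ¬ Summable (fun n => |x n|))
    (Θ : ℕ → Ω → ℝ) (hΘmeas : ∀ n, Measurable (Θ n))
    (hindep : ProbabilityTheory.iIndepFun Θ μ)
    (h1 : ∀ n, μ {ω | Θ n ω = 1} = ENNReal.ofReal (p n))
    (h0 : ∀ n, μ {ω | Θ n ω = 0} = ENNReal.ofReal (1 - p n)) :
    ∀ᵐ ω ∂μ,
      Tendsto (fun m => ∑ n ∈ Finset.range m, |x n| * (1 - Θ n ω / p n)) atTop atTop := by
  have hA : ∀ n, MeasurableSet {ω | Θ n ω = 1} :=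
    fun n => (hΘmeas n) (measurableSet_singleton 1)
  have hB : ∀ n, MeasurableSet {ω | Θ n ω = 0} :=
    fun n => (hΘmeas n) (measurableSet_singleton 0)
  have hsum : (∑' n, μ {ω | Θ n ω = 1}) ≠ ⊤ := by
    have : (∑' n, μ {ω | Θ n ω = 1}) = ENNReal.ofReal (∑' n, p n) := by
      rw [ENNReal.ofReal_tsum_of_nonneg (fun n => (hp n).1.le) hpsum]
      exact tsum_congr h1
    rw [this]; exact ENNReal.ofReal_ne_top
  have hBC : ∀ᵐ ω ∂μ, ∀ᶠ n in atTop, ω ∉ {ω | Θ n ω = 1} :=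
    ae_eventually_notMem hsum
  have h01 : ∀ᵐ ω ∂μ, ∀ n, Θ n ω = 1 ∨ Θ n ω = 0 := by
    rw [ae_all_iff]
    intro n
    have hd : Disjoint {ω | Θ n ω = 1} {ω | Θ n ω = 0} := by
      rw [Set.disjoint_left]
      intro ω ha hb
      simp only [Set.mem_setOf_eq] at ha hb
      rw [ha] at hb; norm_num at hb
    have hu : μ ({ω | Θ n ω = 1} ∪ {ω | Θ n ω = 0}) = 1 := by
      rw [measure_union hd (hB n), h1 n, h0 n,
        ← ENNReal.ofReal_add (hp n).1.le (by linarith [(hp n).2])]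
      norm_num
    have hc : μ ({ω | Θ n ω = 1} ∪ {ω | Θ n ω = 0})ᶜ = 0 := by
      rw [measure_compl ((hA n).union (hB n)) (measure_ne_top μ _), hu, measure_univ]
      simp
    refine measure_mono_null ?_ hc
    intro ω hω
    simp only [Set.mem_compl_iff, Set.mem_union, Set.mem_setOf_eq] at *
    tauto
  filter_upwards [hBC, h01] with ω hev h01ω
  obtain ⟨N, hN⟩ := Filter.eventually_atTop.mp hev
  have hzero : ∀ n, N ≤ n → Θ n ω = 0 := fun n hn =>
    (h01ω n).resolve_left (hN n hn)
  set t : ℕ → ℝ := fun n => |x n| * (1 - Θ n ω / p n) with ht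
  have hkey : ∀ m, N ≤ m → ∑ n ∈ Finset.range m, t n
      = (∑ n ∈ Finset.range m, |x n|) + ∑ n ∈ Finset.range N, (t n - |x n|) := by
    intro m hm
    have hdiff : ∑ n ∈ Finset.range N, (t n - |x n|)
        = ∑ n ∈ Finset.range m, (t n - |x n|) := by
      refine Finset.sum_subset (Finset.range_subset_range.2 hm) ?_
      intro n _ hn
      simp only [Finset.mem_range, not_lt] at hn
      have h0n : Θ n ω = 0 := hzero n hn
      simp [ht, h0n]
    rw [hdiff, Finset.sum_sub_distrib]
    ring
  have hx : Tendsto (fun m => ∑ n ∈ Finset.range m, |x n|) atTop atTop :=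
    (not_summable_iff_tendsto_nat_atTop_of_nonneg (fun n => abs_nonneg (x n))).mp hxdiv
  refine Tendsto.congr' ?_
    (tendsto_atTop_add_const_right atTop (∑ n ∈ Finset.range N, (t n - |x n|)) hx)
  filter_upwards [eventually_ge_atTop N] with m hm
  exact (hkey m hm).symm
end

section
/- Let Θ be a standard exponential random variable, and let λ, γ : [0,∞) → [0,∞) be continuous functions satisfying ∫_0^∞ λ(s) ds < ∞ and ∫_0^∞ γ(s) λ(s) ds = ∞. Define ρ = inf{ t ≥ 0 : ∫_0^t λ(s) ds ≥ Θ } (inf ∅ = ∞) and X_t = γ(ρ)·1_{ρ ≤ t} − ∫_0^t γ(s) λ(s) 1_{s < ρ} ds. Then: (i) P(ρ = ∞) = exp( −∫_0^∞ λ(s) ds ) > 0; (ii) almost surely, sup_{t ≥ 0} X_t < ∞; and (iii) on the event {ρ = ∞} one has lim_{t→∞} X_t = −∞, hence P( limsup_{t→∞} X_t = −∞ ) ≥ exp( −∫_0^∞ λ(s) ds ) > 0. -/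
open MeasureTheory Filter Set
open scoped ENNReal NNReal Topology

namespace PaperStmt

variable {Ω : Type*}

/-- The cumulative hazard `Λ(t) = ∫_0^t λ(s) ds`. -/
noncomputable def cumHazard (l : ℝ → ℝ) (t : ℝ) : ℝ := ∫ s in (0 : ℝ)..t, l s

/-- The Cox construction: `ρ = inf{t ≥ 0 : ∫_0^t λ(s) ds ≥ Θ}`, with `inf ∅ = ∞`. -/
noncomputable def coxTime (l : ℝ → ℝ) (Θ : Ω → ℝ) (ω : Ω) : ℝ≥0∞ :=
  ⨅ (t : ℝ≥0) (_ : Θ ω ≤ cumHazard l t), (t : ℝ≥0∞)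

/-- The process `X_t = γ(ρ)·1_{ρ ≤ t} - ∫_0^t γ(s) λ(s) 1_{s < ρ} ds`. -/
noncomputable def coxProcess (l g : ℝ → ℝ) (Θ : Ω → ℝ) : ℝ≥0 → Ω → ℝ :=
  fun t ω =>
    (if coxTime l Θ ω ≤ (t : ℝ≥0∞) then g (coxTime l Θ ω).toReal else 0)
      - ∫ s in (0 : ℝ)..(t : ℝ),
          Set.indicator {s : ℝ | ENNReal.ofReal s < coxTime l Θ ω} (fun s => g s * l s) s

/-- **A bounded martingale from the Cox construction that diverges to `-∞` with positive
probability.** Suppose additionally that `∫_0^∞ λ(s) ds < ∞` and `∫_0^∞ γ(s)λ(s) ds = ∞`.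
Then: (i) `P(ρ = ∞) = exp(-∫_0^∞ λ) > 0`; (ii) almost surely `sup_t X_t < ∞`; and (iii)
a.s. on `{ρ = ∞}` one has `X_t → -∞`, hence
`P(limsup_{t→∞} X_t = -∞) ≥ exp(-∫_0^∞ λ) > 0`. -/
theorem coxProcess_bounded_and_divergent {mΩ : MeasurableSpace Ω} (μ : Measure Ω)
    [IsProbabilityMeasure μ]
    (Θ : Ω → ℝ) (hΘmeas : Measurable Θ)
    (hΘexp : ∀ u : ℝ, 0 ≤ u → μ {ω | u < Θ ω} = ENNReal.ofReal (Real.exp (-u)))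
    (l g : ℝ → ℝ) (hl : ContinuousOn l (Ici 0)) (hg : ContinuousOn g (Ici 0))
    (hl0 : ∀ s, 0 ≤ s → 0 ≤ l s) (hg0 : ∀ s, 0 ≤ s → 0 ≤ g s)
    (hlint : IntegrableOn l (Ioi 0) volume)
    (hgldiv : ∫⁻ s in Ioi (0 : ℝ), ENNReal.ofReal (g s * l s) = ∞) :
    (μ {ω | coxTime l Θ ω = ∞} = ENNReal.ofReal (Real.exp (-∫ s in Ioi (0 : ℝ), l s)) ∧
      0 < μ {ω | coxTime l Θ ω = ∞}) ∧
    (∀ᵐ ω ∂μ, ∃ C : ℝ, ∀ t : ℝ≥0, coxProcess l g Θ t ω ≤ C) ∧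
    (∀ᵐ ω ∂μ, coxTime l Θ ω = ∞ →
      Tendsto (fun t : ℝ≥0 => coxProcess l g Θ t ω) atTop atBot) ∧
    ENNReal.ofReal (Real.exp (-∫ s in Ioi (0 : ℝ), l s)) ≤
      μ {ω | Tendsto (fun t : ℝ≥0 => coxProcess l g Θ t ω) atTop atBot} := by
  classical
  set L : ℝ := ∫ s in Ioi (0:ℝ), l s with hLdef
  have hL0 : 0 ≤ L := setIntegral_nonneg measurableSet_Ioi fun x hx => hl0 x (le_of_lt hx)
  -- the cumulative hazard is bounded by L
  have hΛle : ∀ t : ℝ, 0 ≤ t → cumHazard l t ≤ L := by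
    intro t ht
    rw [cumHazard, intervalIntegral.integral_of_le ht]
    exact setIntegral_mono_set hlint
      ((ae_restrict_iff' measurableSet_Ioi).2 (ae_of_all _ fun x hx => hl0 x (le_of_lt hx)))
      (HasSubset.Subset.eventuallyLE Ioc_subset_Ioi_self)
  have hΛtend : Tendsto (fun n : ℕ => cumHazard l n) atTop (𝓝 L) :=
    intervalIntegral_tendsto_integral_Ioi 0 hlint tendsto_natCast_atTop_atTop
  -- characterization of {ρ = ∞}
  have hchar : ∀ ω : Ω, coxTime l Θ ω = ∞ ↔ ∀ t : ℝ≥0, cumHazard l t < Θ ω := by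
    intro ω
    simp [coxTime, iInf_eq_top, ENNReal.coe_ne_top, not_le]
  have hsub1 : {ω : Ω | L < Θ ω} ⊆ {ω : Ω | coxTime l Θ ω = ∞} := by
    intro ω hω
    rw [mem_setOf_eq, hchar]
    exact fun t => lt_of_le_of_lt (hΛle t t.coe_nonneg) hω
  have hsub2 : {ω : Ω | coxTime l Θ ω = ∞} ⊆ {ω : Ω | L ≤ Θ ω} := by
    intro ω hω
    rw [mem_setOf_eq, hchar] at hω
    refine le_of_tendsto hΛtend (Eventually.of_forall fun n => ?_)
    have := hω (n : ℝ≥0)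
    simpa using this.le
  have hmeas1 : μ {ω : Ω | L < Θ ω} = ENNReal.ofReal (Real.exp (-L)) := hΘexp L hL0
  -- upper bound for μ {L ≤ Θ}
  have hub : μ {ω : Ω | L ≤ Θ ω} ≤ ENNReal.ofReal (Real.exp (-L)) := by
    rcases eq_or_lt_of_le hL0 with h0 | hLpos
    · rw [← h0]
      simp only [neg_zero, Real.exp_zero, ENNReal.ofReal_one]
      exact (measure_mono (subset_univ _)).trans (by simp)
    · have htend : Tendsto (fun n : ℕ => ENNReal.ofReal (Real.exp (-(L - 1/(n+1:ℝ)))))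
          atTop (𝓝 (ENNReal.ofReal (Real.exp (-L)))) := by
        have h1 : Tendsto (fun n : ℕ => L - 1/(n+1:ℝ)) atTop (𝓝 (L - 0)) :=
          tendsto_const_nhds.sub tendsto_one_div_add_atTop_nhds_zero_nat
        rw [sub_zero] at h1
        exact ((ENNReal.continuous_ofReal.comp
          (Real.continuous_exp.comp continuous_neg)).tendsto L).comp h1
      refine ge_of_tendsto htend ?_
      filter_upwards [tendsto_one_div_add_atTop_nhds_zero_nat.eventually
        (eventually_le_nhds hLpos)] with n hn
      have h0' : 0 ≤ L - 1/(n+1:ℝ) := by linarith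
      rw [← hΘexp _ h0']
      refine measure_mono fun ω hω => ?_
      have hpos : (0:ℝ) < 1/(n+1:ℝ) := by positivity
      rw [mem_setOf_eq] at *
      linarith
  have hmain : μ {ω : Ω | coxTime l Θ ω = ∞} = ENNReal.ofReal (Real.exp (-L)) :=
    le_antisymm ((measure_mono hsub2).trans hub) (hmeas1 ▸ measure_mono hsub1)
  -- part (ii): pathwise boundedness
  have hii : ∀ ω : Ω, ∃ C : ℝ, ∀ t : ℝ≥0, coxProcess l g Θ t ω ≤ C := by
    intro ω
    refine ⟨g (coxTime l Θ ω).toReal, fun t => ?_⟩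
    have hint : 0 ≤ ∫ s in (0:ℝ)..(t:ℝ),
        Set.indicator {s : ℝ | ENNReal.ofReal s < coxTime l Θ ω} (fun s => g s * l s) s :=
      intervalIntegral.integral_nonneg t.coe_nonneg fun u hu =>
        indicator_apply_nonneg fun _ => mul_nonneg (hg0 u hu.1) (hl0 u hu.1)
    have hg' : 0 ≤ g (coxTime l Θ ω).toReal := hg0 _ ENNReal.toReal_nonneg
    simp only [coxProcess]
    split <;> linarith
  -- the integral of g*l up to t tends to infinity
  have hglcont : ContinuousOn (fun s => g s * l s) (Ici 0) := hg.mul hl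
  have hglII : ∀ a b : ℝ, 0 ≤ a → a ≤ b →
      IntervalIntegrable (fun s => g s * l s) volume a b := by
    intro a b ha hab
    exact (hglcont.mono (by rw [uIcc_of_le hab]; exact fun x hx => ha.trans hx.1)).intervalIntegrable
  have hFmono : ∀ a b : ℝ, 0 ≤ a → a ≤ b →
      (∫ s in (0:ℝ)..a, g s * l s) ≤ ∫ s in (0:ℝ)..b, g s * l s := by
    intro a b ha hab
    rw [← intervalIntegral.integral_add_adjacent_intervals (hglII 0 a le_rfl ha)
      (hglII a b ha hab)]
    have h2 : 0 ≤ ∫ s in a..b, g s * l s :=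
      intervalIntegral.integral_nonneg hab fun u hu =>
        mul_nonneg (hg0 u (ha.trans hu.1)) (hl0 u (ha.trans hu.1))
    linarith
  have hFunbdd : ∀ M : ℝ, ∃ n : ℕ, M ≤ ∫ s in (0:ℝ)..(n:ℝ), g s * l s := by
    intro M
    set ν : Measure ℝ := volume.withDensity (fun s => ENNReal.ofReal (g s * l s)) with hνdef
    have hU : (⋃ n : ℕ, Ioc (0:ℝ) (n:ℝ)) = Ioi 0 := by
      ext x
      simp only [mem_iUnion, mem_Ioc, mem_Ioi]
      constructor
      · rintro ⟨n, h, _⟩; exact h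
      · intro hx; obtain ⟨n, hn⟩ := exists_nat_ge x; exact ⟨n, hx, hn⟩
    have hdir : Directed (· ⊆ ·) (fun n : ℕ => Ioc (0:ℝ) (n:ℝ)) := by
      refine Monotone.directed_le fun i j hij => Ioc_subset_Ioc_right ?_
      exact_mod_cast hij
    have hsup : (⨆ n : ℕ, ν (Ioc (0:ℝ) (n:ℝ))) = ∞ := by
      rw [← hdir.measure_iUnion, hU, hνdef, withDensity_apply _ measurableSet_Ioi]
      exact hgldiv
    have hM : ENNReal.ofReal M < ⨆ n : ℕ, ν (Ioc (0:ℝ) (n:ℝ)) := by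
      rw [hsup]; exact ENNReal.ofReal_lt_top
    obtain ⟨n, hn⟩ := lt_iSup_iff.mp hM
    refine ⟨n, ?_⟩
    rw [intervalIntegral.integral_of_le (Nat.cast_nonneg n)]
    have hνn : ν (Ioc (0:ℝ) (n:ℝ)) = ∫⁻ s in Ioc (0:ℝ) (n:ℝ), ENNReal.ofReal (g s * l s) :=
      withDensity_apply _ measurableSet_Ioc
    have hIOn : IntegrableOn (fun s => g s * l s) (Ioc (0:ℝ) (n:ℝ)) volume := by
      refine (hglcont.mono fun x hx => (mem_Icc.mp hx).1).integrableOn_compact isCompact_Icc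
        |>.mono_set Ioc_subset_Icc_self
    have hnn : (0:ℝ → ℝ) ≤ᵐ[volume.restrict (Ioc (0:ℝ) (n:ℝ))] fun s => g s * l s :=
      (ae_restrict_iff' measurableSet_Ioc).2 (ae_of_all _ fun x hx =>
        mul_nonneg (hg0 x hx.1.le) (hl0 x hx.1.le))
    have heq : ∫ s in Ioc (0:ℝ) (n:ℝ), g s * l s =
        (∫⁻ s in Ioc (0:ℝ) (n:ℝ), ENNReal.ofReal (g s * l s)).toReal :=
      integral_eq_lintegral_of_nonneg_ae hnn hIOn.1
    have hfin : (∫⁻ s in Ioc (0:ℝ) (n:ℝ), ENNReal.ofReal (g s * l s)) ≠ ⊤ := by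
      refine ne_of_lt (lt_of_le_of_lt (lintegral_mono fun x => Real.ofReal_le_enorm _) ?_)
      exact hIOn.2
    rw [heq]
    rcases le_or_gt M 0 with hM0 | hM0
    · exact hM0.trans ENNReal.toReal_nonneg
    · calc M = (ENNReal.ofReal M).toReal := (ENNReal.toReal_ofReal hM0.le).symm
        _ ≤ _ := ENNReal.toReal_mono hfin (by rw [← hνn]; exact hn.le)
  have hF : Tendsto (fun t : ℝ => ∫ s in (0:ℝ)..t, g s * l s) atTop atTop := by
    rw [tendsto_atTop]
    intro b
    obtain ⟨n, hn⟩ := hFunbdd b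
    filter_upwards [eventually_ge_atTop (n:ℝ)] with t ht
    exact hn.trans (hFmono n t (Nat.cast_nonneg n) ht)
  -- part (iii): divergence on {ρ = ∞}
  have hiii : ∀ ω : Ω, coxTime l Θ ω = ∞ →
      Tendsto (fun t : ℝ≥0 => coxProcess l g Θ t ω) atTop atBot := by
    intro ω hω
    have heq : ∀ t : ℝ≥0, coxProcess l g Θ t ω = -(∫ s in (0:ℝ)..(t:ℝ), g s * l s) := by
      intro t
      have hset : {s : ℝ | ENNReal.ofReal s < coxTime l Θ ω} = univ := by
        ext x; simp [hω]
      have hif : ¬ (coxTime l Θ ω ≤ ((t : ℝ≥0) : ℝ≥0∞)) := by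
        rw [hω]; simp
      simp only [coxProcess, if_neg hif, hset, indicator_univ, zero_sub]
    rw [show (fun t : ℝ≥0 => coxProcess l g Θ t ω)
        = fun t : ℝ≥0 => -(∫ s in (0:ℝ)..(t:ℝ), g s * l s) from funext heq]
    exact tendsto_neg_atTop_atBot.comp (hF.comp (NNReal.tendsto_coe_atTop.2 tendsto_id))
  refine ⟨⟨hmain, ?_⟩, Eventually.of_forall hii, Eventually.of_forall hiii, ?_⟩
  · rw [hmain]
    exact ENNReal.ofReal_pos.2 (Real.exp_pos _)
  · rw [← hmain]
    exact measure_mono fun ω hω => hiii ω hω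


end PaperStmt
end
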